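/- Let A and B be bounded linear operators on a complex Hilbert space H such that A and AB are normal. If A*AB = BA*A, then BA is normal. -/

import Mathlib

open ContinuousLinearMap
open scoped InnerProductSpace

variable {H : Type*} [NormedAddCommGroup H] [InnerProductSpace ℂ H] [CompleteSpace H]

set_option maxHeartbeats 1000000 in
/-- If A and AB are normal and A*AB = BA*A, then BA is normal. -/
theorem stmt0 (A B : H →L[ℂ] H)
    (hA : adjoint A * A = A * adjoint A)
    (hAB : adjoint (A * B) * (A * B) = (A * B) * adjoint (A * B))
    (hcomm : adjoint A * A * B = B * (adjoint A * A)) :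
    adjoint (B * A) * (B * A) = (B * A) * adjoint (B * A) := by
  have hadj : ∀ S T : H →L[ℂ] H, adjoint (S * T) = adjoint T * adjoint S := by
    intro S T
    rw [← star_eq_adjoint, star_mul, star_eq_adjoint, star_eq_adjoint]
  -- pointwise versions of hypotheses
  have h1 : ∀ x : H, adjoint A (A x) = A (adjoint A x) := fun x => by
    have := ContinuousLinearMap.ext_iff.mp hA x
    simpa [mul_apply] using this
  have h2 : ∀ x : H, adjoint A (A (B x)) = B (adjoint A (A x)) := fun x => by
    have := ContinuousLinearMap.ext_iff.mp hcomm x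
    simpa [mul_apply] using this
  have hcomm' : adjoint B * (adjoint A * A) = adjoint A * A * adjoint B := by
    simpa only [hadj, adjoint_adjoint] using congrArg adjoint hcomm
  have h2' : ∀ x : H, adjoint B (adjoint A (A x)) = adjoint A (A (adjoint B x)) :=
    fun x => by
      have := ContinuousLinearMap.ext_iff.mp hcomm' x
      simpa [mul_apply] using this
  have h3 : ∀ x : H, adjoint B (adjoint A (A (B x))) = A (B (adjoint B (adjoint A x))) :=
    fun x => by
      have := ContinuousLinearMap.ext_iff.mp hAB x
      simpa [mul_apply, hadj] using this
  have eq1 : ∀ x : H, adjoint A (A (adjoint B (B x))) = A (B (adjoint B (adjoint A x))) :=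
    fun x => (h2' (B x)).symm.trans (h3 x)
  -- the main pointwise identity:  A* B* B A = A* A B B*
  have main : ∀ x : H, adjoint A (adjoint B (B (A x))) = adjoint A (A (B (adjoint B x))) := by
    intro x
    -- key: P (X x) = P (Y x) where P = A* A
    have key : adjoint A (A (adjoint A (adjoint B (B (A x))))) =
        adjoint A (A (adjoint A (A (B (adjoint B x))))) :=
      calc adjoint A (A (adjoint A (adjoint B (B (A x)))))
          = adjoint A (adjoint A (A (adjoint B (B (A x))))) := by
            rw [← h1 (adjoint B (B (A x)))]
        _ = adjoint A (A (B (adjoint B (adjoint A (A x))))) := by rw [eq1 (A x)]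
        _ = adjoint A (A (B (adjoint A (A (adjoint B x))))) := by rw [h2' x]
        _ = adjoint A (A (adjoint A (A (B (adjoint B x))))) := by rw [← h2 (adjoint B x)]
    set u : H := adjoint A (adjoint B (B (A x))) with hu
    set v : H := adjoint A (A (B (adjoint B x))) with hv
    have hPd : adjoint A (A (u - v)) = 0 := by
      rw [map_sub, map_sub, key, sub_self]
    have hAd : A (u - v) = 0 := by
      have h := ContinuousLinearMap.adjoint_inner_left A (u - v) (A (u - v))
      rw [hPd] at h
      have h0 : ⟪A (u - v), A (u - v)⟫_ℂ = 0 := by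
        rw [← h]; simp
      exact inner_self_eq_zero.mp h0
    have hx : ⟪u, u - v⟫_ℂ = 0 := by
      rw [hu, ContinuousLinearMap.adjoint_inner_left, hAd, inner_zero_right]
    have hy : ⟪v, u - v⟫_ℂ = 0 := by
      rw [hv, ContinuousLinearMap.adjoint_inner_left, hAd, inner_zero_right]
    have hdd : ⟪u - v, u - v⟫_ℂ = 0 := by
      rw [inner_sub_left, hx, hy, sub_zero]
    exact sub_eq_zero.mp (inner_self_eq_zero.mp hdd)
  -- finish
  ext x
  simp only [mul_apply_eq_comp, hadj]
  rw [← h1 (adjoint B x), ← h2 (adjoint B x)]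
  exact main x
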